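/- Let (T,o) be a finite semi-k-ary rooted tree with m = |V_k(T)|, and let Y_n be a k-element subset of {1,…,n}. Let Ind(T,o; L_{n,k}, Y_n) be the set of injective maps φ : V(T) → V(L_{n,k}) with φ(o) = Y_n such that for all u, v ∈ V(T), u and v are adjacent in T if and only if φ(u) and φ(v) are adjacent in L_{n,k}. Then (k!)^m · ∏_{j=0}^{m−1} (n − k − j) ≤ |Ind(T,o; L_{n,k}, Y_n)| ≤ (k!)^m · n^m. -/

import Mathlib

open SimpleGraph

/-- The bipartite graph `L_{n,k}`. -/
def Lgraph (n k : ℕ) : SimpleGraph (Finset (Fin n)) where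
  Adj A B := (A.card = k ∧ B.card = k + 1 ∧ A ⊆ B) ∨ (B.card = k ∧ A.card = k + 1 ∧ B ⊆ A)
  symm := by
    constructor
    intro A B h
    tauto
  loopless := by
    constructor
    intro A h
    rcases h with ⟨h1, h2, -⟩ | ⟨h1, h2, -⟩ <;> omega

open scoped Classical

set_option linter.unusedSectionVars false

section Aux

variable {V : Type*} [Fintype V] [DecidableEq V]

/-- The parent of a vertex in a rooted tree. -/
noncomputable def stPar (T : SimpleGraph V) (o : V) (v : V) : V :=
  if h : ∃ w, T.Adj v w ∧ T.dist o w + 1 = T.dist o v then h.choose else o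

lemma stPar_root (T : SimpleGraph V) (o : V) : stPar T o o = o := by
  rw [stPar, dif_neg]
  rintro ⟨w, -, h⟩
  simp [SimpleGraph.dist_self] at h

lemma st_dist_pos {T : SimpleGraph V} {o v : V} (htree : T.IsTree) (hv : v ≠ o) :
    0 < T.dist o v :=
  htree.isConnected.pos_dist_of_ne (Ne.symm hv)

lemma st_exists_parent {T : SimpleGraph V} {o v : V} (htree : T.IsTree) (hv : v ≠ o) :
    ∃ w, T.Adj v w ∧ T.dist o w + 1 = T.dist o v := by
  have hc := htree.isConnected
  obtain ⟨p, hp, hl⟩ := hc.exists_path_of_dist v o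
  have hne : v ≠ o := hv
  obtain ⟨w, hadj, q, rfl⟩ := SimpleGraph.Walk.exists_eq_cons_of_ne hne p
  refine ⟨w, hadj, ?_⟩
  have hq : T.dist w o ≤ q.length := SimpleGraph.dist_le q
  have h1 : T.dist v o ≤ T.dist v w + T.dist w o := hc.dist_triangle
  have h2 : T.dist v w = 1 := SimpleGraph.dist_eq_one_iff_adj.mpr hadj
  have h3 : q.length + 1 = T.dist v o := by
    simpa [SimpleGraph.Walk.length_cons] using hl
  have h4 : T.dist o w = T.dist w o := SimpleGraph.dist_comm
  have h5 : T.dist o v = T.dist v o := SimpleGraph.dist_comm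
  omega

lemma stPar_spec {T : SimpleGraph V} {o v : V} (htree : T.IsTree) (hv : v ≠ o) :
    T.Adj v (stPar T o v) ∧ T.dist o (stPar T o v) + 1 = T.dist o v := by
  have h := st_exists_parent htree hv
  rw [stPar, dif_pos h]
  exact h.choose_spec

lemma stPar_adj {T : SimpleGraph V} {o v : V} (htree : T.IsTree) (hv : v ≠ o) :
    T.Adj v (stPar T o v) := (stPar_spec htree hv).1

lemma stPar_dist {T : SimpleGraph V} {o v : V} (htree : T.IsTree) (hv : v ≠ o) :
    T.dist o (stPar T o v) + 1 = T.dist o v := (stPar_spec htree hv).2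

lemma st_mem_support_dist_le {T : SimpleGraph V} {a o u : V} (p : T.Walk a o)
    (hp : p.IsPath) (hu : u ∈ p.support) :
    (p.takeUntil u hu).length + T.dist u o ≤ p.length := by
  have h1 : T.dist u o ≤ (p.dropUntil u hu).length := SimpleGraph.dist_le _
  have h2 : (p.takeUntil u hu).length + (p.dropUntil u hu).length = p.length := by
    rw [← SimpleGraph.Walk.length_append, SimpleGraph.Walk.take_spec]
  omega

lemma st_adj_dist_cases {T : SimpleGraph V} {o u v : V} (htree : T.IsTree)
    (h : T.Adj u v) :
    T.dist o u + 1 = T.dist o v ∨ T.dist o v + 1 = T.dist o u := by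
  have hc := htree.isConnected
  have huv : T.dist u v = 1 := SimpleGraph.dist_eq_one_iff_adj.mpr h
  have hvu : T.dist v u = 1 := SimpleGraph.dist_eq_one_iff_adj.mpr h.symm
  have t1 : T.dist o v ≤ T.dist o u + 1 := by
    have := hc.dist_triangle (u := o) (v := u) (w := v); omega
  have t2 : T.dist o u ≤ T.dist o v + 1 := by
    have := hc.dist_triangle (u := o) (v := v) (w := u); omega
  have hne : T.dist o u ≠ T.dist o v := by
    intro heq
    -- both equal d; derive contradiction
    obtain ⟨q, hq, hql⟩ := hc.exists_path_of_dist v o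
    by_cases hmem : u ∈ q.support
    · -- dist u o < d, contradiction with dist o u = d
      have h1 := st_mem_support_dist_le q hq hmem
      have h2 : (q.takeUntil u hmem).length ≠ 0 := by
        intro h0
        exact h.ne (SimpleGraph.Walk.eq_of_length_eq_zero h0).symm
      have h3 : T.dist u o = T.dist o u := SimpleGraph.dist_comm
      have h4 : T.dist v o = T.dist o v := SimpleGraph.dist_comm
      omega
    · -- cons is a path u → o of length d+1; but unique path has length d
      have hpath : (SimpleGraph.Walk.cons h q).IsPath :=
        SimpleGraph.Walk.IsPath.cons hq hmem
      obtain ⟨p', hp', hpl'⟩ := hc.exists_path_of_dist u o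
      have huniq := htree.existsUnique_path u o
      have := huniq.unique hpath hp'
      have hlen : (SimpleGraph.Walk.cons h q).length = p'.length := by rw [this]
      rw [SimpleGraph.Walk.length_cons] at hlen
      have h4 : T.dist v o = T.dist o v := SimpleGraph.dist_comm
      have h5 : T.dist u o = T.dist o u := SimpleGraph.dist_comm
      omega
  omega

lemma st_parent_unique {T : SimpleGraph V} {o v w : V} (htree : T.IsTree)
    (h : T.Adj v w) (hd : T.dist o w + 1 = T.dist o v) : w = stPar T o v := by
  have hc := htree.isConnected
  have hv : v ≠ o := by
    intro rfl'
    subst rfl'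
    simp [SimpleGraph.dist_self] at hd
  have hW : ∀ w' : V, T.Adj v w' → T.dist o w' + 1 = T.dist o v → ∀ w'' : V,
      T.Adj v w'' → T.dist o w'' + 1 = T.dist o v → w' = w'' := by
    intro w1 h1 hd1 w2 h2 hd2
    obtain ⟨q1, hq1, hl1⟩ := hc.exists_path_of_dist w1 o
    obtain ⟨q2, hq2, hl2⟩ := hc.exists_path_of_dist w2 o
    have hvm1 : v ∉ q1.support := by
      intro hm
      have := st_mem_support_dist_le q1 hq1 hm
      have h2' : (q1.takeUntil v hm).length ≠ 0 := by
        intro h0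
        exact h1.ne' (SimpleGraph.Walk.eq_of_length_eq_zero h0)
      have e1 : T.dist v o = T.dist o v := SimpleGraph.dist_comm
      have e2 : T.dist w1 o = T.dist o w1 := SimpleGraph.dist_comm
      omega
    have hvm2 : v ∉ q2.support := by
      intro hm
      have := st_mem_support_dist_le q2 hq2 hm
      have h2' : (q2.takeUntil v hm).length ≠ 0 := by
        intro h0
        exact h2.ne' (SimpleGraph.Walk.eq_of_length_eq_zero h0)
      have e1 : T.dist v o = T.dist o v := SimpleGraph.dist_comm
      have e2 : T.dist w2 o = T.dist o w2 := SimpleGraph.dist_comm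
      omega
    have hp1 : (SimpleGraph.Walk.cons h1 q1).IsPath := SimpleGraph.Walk.IsPath.cons hq1 hvm1
    have hp2 : (SimpleGraph.Walk.cons h2 q2).IsPath := SimpleGraph.Walk.IsPath.cons hq2 hvm2
    have huniq := htree.existsUnique_path v o
    have heq := huniq.unique hp1 hp2
    have hsupp : (SimpleGraph.Walk.cons h1 q1).support = (SimpleGraph.Walk.cons h2 q2).support := by
      rw [heq]
    rw [SimpleGraph.Walk.support_cons, SimpleGraph.Walk.support_cons] at hsupp
    have : q1.support = q2.support := by
      injection hsupp
    have hh1 := SimpleGraph.Walk.support_eq_cons q1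
    have hh2 := SimpleGraph.Walk.support_eq_cons q2
    rw [hh1, hh2] at this
    injection this with h' _
  exact hW w h hd _ (stPar_adj htree hv) (stPar_dist htree hv)

end Aux

section Aux2

variable {V : Type*} [Fintype V] [DecidableEq V]

lemma stPar_iter {T : SimpleGraph V} {o : V} (htree : T.IsTree) :
    ∀ (j : ℕ) (v : V), (stPar T o)^[j] v = o ∨
      T.dist o ((stPar T o)^[j] v) + j = T.dist o v := by
  intro j
  induction j with
  | zero => intro v; right; simp
  | succ j IH =>
    intro v
    rcases IH v with h | h
    · left
      rw [Function.iterate_succ_apply', h, stPar_root]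
    · by_cases ho : (stPar T o)^[j] v = o
      · left
        rw [Function.iterate_succ_apply', ho, stPar_root]
      · rcases eq_or_ne ((stPar T o)^[j+1] v) o with h2 | h2
        · left; exact h2
        · right
          rw [Function.iterate_succ_apply'] at h2 ⊢
          have := stPar_dist htree ho
          omega

/-- descendant set membership: `x w ∈ φ v` forces `w` to be an ancestor. -/
lemma stPar_iter_dist_le {T : SimpleGraph V} {o : V} (htree : T.IsTree)
    {j : ℕ} {v w : V} (h : (stPar T o)^[j] v = w) (hw : w ≠ o) :
    T.dist o w + j = T.dist o v := by
  rcases stPar_iter htree j v with h' | h'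
  · rw [h] at h'; exact absurd h' hw
  · rw [h] at h'; exact h'

lemma stPar_iter_root (T : SimpleGraph V) (o : V) (j : ℕ) : (stPar T o)^[j] o = o := by
  induction j with
  | zero => rfl
  | succ j IHj => rw [Function.iterate_succ_apply', IHj, stPar_root]

/-- The set of children of a vertex. -/
def stChild (T : SimpleGraph V) (o : V) (v : V) : Set V :=
  {w | T.Adj v w ∧ T.dist o w = T.dist o v + 1}

lemma stChild_par {T : SimpleGraph V} {o v w : V} (htree : T.IsTree)
    (hw : w ∈ stChild T o v) : stPar T o w = v ∧ w ≠ o := by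
  obtain ⟨hadj, hd⟩ := hw
  have hwo : w ≠ o := by
    intro rfl'
    subst rfl'
    simp [SimpleGraph.dist_self] at hd
  exact ⟨(st_parent_unique htree hadj.symm (by omega)).symm, hwo⟩

lemma st_mem_child {T : SimpleGraph V} {o v : V} (htree : T.IsTree) (hv : v ≠ o) :
    v ∈ stChild T o (stPar T o v) := by
  refine ⟨(stPar_adj htree hv).symm, ?_⟩
  have := stPar_dist htree hv
  omega

lemma stChild_ncard {T : SimpleGraph V} {o v : V} {k : ℕ} (htree : T.IsTree)
    (hsemi : Set.ncard {w : V | T.Adj v w} = k + 1) (hv : v ≠ o) :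
    (stChild T o v).ncard = k := by
  have hpar : stPar T o v ∈ {w : V | T.Adj v w} := stPar_adj htree hv
  have hsub : stChild T o v = {w : V | T.Adj v w} \ {stPar T o v} := by
    ext w
    simp only [stChild, Set.mem_setOf_eq, Set.mem_diff, Set.mem_singleton_iff]
    constructor
    · rintro ⟨hadj, hd⟩
      refine ⟨hadj, ?_⟩
      intro rfl'
      subst rfl'
      have := stPar_dist htree hv
      omega
    · rintro ⟨hadj, hne⟩
      refine ⟨hadj, ?_⟩
      rcases st_adj_dist_cases htree (o := o) hadj with h | h
      · omega
      · exact absurd (st_parent_unique htree hadj h).symm (by exact fun h' => hne h'.symm)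
  rw [hsub]
  rw [Set.ncard_diff_singleton_of_mem hpar, hsemi]
  simp

end Aux2

section Aux3

variable {V : Type*} [Fintype V] [DecidableEq V]

/-- the `i`-th element of a finset of `Fin n` in increasing order. -/
def stPick {n : ℕ} (S : Finset (Fin n)) (i : ℕ) (dft : Fin n) : Fin n :=
  (S.sort (· ≤ ·)).getD i dft

lemma stPick_mem {n : ℕ} {S : Finset (Fin n)} {i : ℕ} {dft : Fin n}
    (h : i < S.card) : stPick S i dft ∈ S := by
  rw [stPick, List.getD_eq_getElem _ _ (by rwa [Finset.length_sort])]
  exact Finset.mem_sort (α := Fin n) (r := (· ≤ ·)) |>.mp (List.getElem_mem _)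

lemma stPick_inj {n : ℕ} {S : Finset (Fin n)} {i j : ℕ} {dft dft' : Fin n}
    (hi : i < S.card) (hj : j < S.card)
    (h : stPick S i dft = stPick S j dft') : i = j := by
  rw [stPick, stPick, List.getD_eq_getElem _ _ (by rwa [Finset.length_sort]),
    List.getD_eq_getElem _ _ (by rwa [Finset.length_sort])] at h
  have hnd : (S.sort (· ≤ ·)).Nodup := S.sort_nodup _
  exact hnd.getElem_inj_iff.mp h

/-- fueled construction of the embedding from parameters `x` (new element for each
odd vertex) and `b` (index of the dropped element for each even vertex). -/
noncomputable def buildPhi (T : SimpleGraph V) (o : V) {n k : ℕ} (Yn : Finset (Fin n))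
    (x : V → Fin n) (b : V → Fin k) : ℕ → V → Finset (Fin n)
  | 0, _ => Yn
  | d + 1, v =>
    if v = o then Yn
    else
      let P := buildPhi T o Yn x b d (stPar T o v)
      if Odd (T.dist o v) then insert (x v) P
      else P.erase (stPick (P.erase (x (stPar T o v))) (b v) (x v))

/-- The actual map `V → Finset (Fin n)` built from the parameters. -/
noncomputable def stPhi (T : SimpleGraph V) (o : V) {n k : ℕ} (Yn : Finset (Fin n))
    (x : V → Fin n) (b : V → Fin k) (v : V) : Finset (Fin n) :=
  buildPhi T o Yn x b (T.dist o v) v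

lemma stPhi_root (T : SimpleGraph V) (o : V) {n k : ℕ} (Yn : Finset (Fin n))
    (x : V → Fin n) (b : V → Fin k) : stPhi T o Yn x b o = Yn := by
  rw [stPhi, SimpleGraph.dist_self]
  rfl

lemma stPhi_step {T : SimpleGraph V} {o : V} (htree : T.IsTree) {n k : ℕ}
    (Yn : Finset (Fin n)) (x : V → Fin n) (b : V → Fin k) {v : V} (hv : v ≠ o) :
    stPhi T o Yn x b v =
      if Odd (T.dist o v) then insert (x v) (stPhi T o Yn x b (stPar T o v))
      else (stPhi T o Yn x b (stPar T o v)).erase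
        (stPick ((stPhi T o Yn x b (stPar T o v)).erase (x (stPar T o v))) (b v) (x v)) := by
  have hd := stPar_dist htree hv
  obtain ⟨d, hdd⟩ : ∃ d, T.dist o v = d + 1 := ⟨T.dist o (stPar T o v), hd.symm⟩
  have hpd : T.dist o (stPar T o v) = d := by omega
  rw [stPhi, hdd]
  rw [buildPhi]
  rw [if_neg hv]
  simp only [stPhi, hpd, hdd]

lemma stPhi_odd {T : SimpleGraph V} {o : V} (htree : T.IsTree) {n k : ℕ}
    (Yn : Finset (Fin n)) (x : V → Fin n) (b : V → Fin k) {v : V}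
    (hv : Odd (T.dist o v)) :
    stPhi T o Yn x b v = insert (x v) (stPhi T o Yn x b (stPar T o v)) := by
  have hvo : v ≠ o := by
    intro rfl'; subst rfl'; simp [SimpleGraph.dist_self] at hv
  rw [stPhi_step htree Yn x b hvo, if_pos hv]

lemma stPhi_even {T : SimpleGraph V} {o : V} (htree : T.IsTree) {n k : ℕ}
    (Yn : Finset (Fin n)) (x : V → Fin n) (b : V → Fin k) {v : V}
    (hv : ¬ Odd (T.dist o v)) (hvo : v ≠ o) :
    stPhi T o Yn x b v = (stPhi T o Yn x b (stPar T o v)).erase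
      (stPick ((stPhi T o Yn x b (stPar T o v)).erase (x (stPar T o v))) (b v) (x v)) := by
  rw [stPhi_step htree Yn x b hvo, if_neg hv]

end Aux3

section Aux4

variable {V : Type*} [Fintype V] [DecidableEq V] {T : SimpleGraph V} {o : V}
  {n k : ℕ} {Yn : Finset (Fin n)} {x : V → Fin n} {b : V → Fin k}

lemma st_dist_eq_zero (htree : T.IsTree) {v : V} (h : T.dist o v = 0) : v = o := by
  by_contra hne
  have := st_dist_pos htree hne
  omega

lemma st_memA (htree : T.IsTree)
    (hx1 : Set.InjOn x {v : V | Odd (T.dist o v)})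
    (hx2 : ∀ v : V, Odd (T.dist o v) → x v ∉ Yn) :
    ∀ (v w : V), Odd (T.dist o w) → x w ∈ stPhi T o Yn x b v →
      ∃ j, (stPar T o)^[j] v = w := by
  suffices H : ∀ (d : ℕ) (v w : V), T.dist o v ≤ d → Odd (T.dist o w) →
      x w ∈ stPhi T o Yn x b v → ∃ j, (stPar T o)^[j] v = w by
    exact fun v w hw hm => H (T.dist o v) v w le_rfl hw hm
  intro d
  induction d with
  | zero =>
    intro v w hd hw hm
    have hvo : v = o := st_dist_eq_zero htree (by omega)
    subst hvo
    rw [stPhi_root] at hm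
    exact absurd hm (hx2 w hw)
  | succ d IH =>
    intro v w hd hw hm
    by_cases hvo : v = o
    · subst hvo
      rw [stPhi_root] at hm
      exact absurd hm (hx2 w hw)
    · have hpd := stPar_dist htree hvo
      by_cases hodd : Odd (T.dist o v)
      · rw [stPhi_odd htree _ _ _ hodd] at hm
        rcases Finset.mem_insert.mp hm with h | h
        · exact ⟨0, (hx1 hodd hw h.symm)⟩
        · obtain ⟨j, hj⟩ := IH (stPar T o v) w (by omega) hw h
          exact ⟨j + 1, by rw [Function.iterate_succ_apply]; exact hj⟩
      · rw [stPhi_even htree _ _ _ hodd hvo] at hm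
        obtain ⟨j, hj⟩ := IH (stPar T o v) w (by omega) hw (Finset.mem_of_mem_erase hm)
        exact ⟨j + 1, by rw [Function.iterate_succ_apply]; exact hj⟩

lemma st_x_not_mem_par (htree : T.IsTree)
    (hx1 : Set.InjOn x {v : V | Odd (T.dist o v)})
    (hx2 : ∀ v : V, Odd (T.dist o v) → x v ∉ Yn)
    {v : V} (hv : Odd (T.dist o v)) : x v ∉ stPhi T o Yn x b (stPar T o v) := by
  intro hmem
  obtain ⟨j, hj⟩ := st_memA htree hx1 hx2 (stPar T o v) v hv hmem
  have hvo : v ≠ o := by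
    intro rfl'; subst rfl'; simp [SimpleGraph.dist_self, Nat.odd_iff] at hv
  have hj' : (stPar T o)^[j + 1] v = v := by
    rw [Function.iterate_succ_apply]; exact hj
  have := stPar_iter_dist_le htree hj' hvo
  omega

lemma st_card (htree : T.IsTree) (hYn : Yn.card = k)
    (hx1 : Set.InjOn x {v : V | Odd (T.dist o v)})
    (hx2 : ∀ v : V, Odd (T.dist o v) → x v ∉ Yn) :
    ∀ v : V, (stPhi T o Yn x b v).card = if Odd (T.dist o v) then k + 1 else k := by
  suffices H : ∀ (d : ℕ) (v : V), T.dist o v ≤ d →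
      (stPhi T o Yn x b v).card = if Odd (T.dist o v) then k + 1 else k by
    exact fun v => H (T.dist o v) v le_rfl
  intro d
  induction d with
  | zero =>
    intro v hd
    have hvo : v = o := st_dist_eq_zero htree (by omega)
    subst hvo
    rw [stPhi_root]
    simp [SimpleGraph.dist_self, Nat.odd_iff, hYn]
  | succ d IH =>
    intro v hd
    by_cases hvo : v = o
    · subst hvo
      rw [stPhi_root]
      simp [SimpleGraph.dist_self, Nat.odd_iff, hYn]
    · have hpd := stPar_dist htree hvo
      have hcardpar := IH (stPar T o v) (by omega)
      by_cases hodd : Odd (T.dist o v)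
      · rw [stPhi_odd htree _ _ _ hodd, if_pos hodd]
        rw [Finset.card_insert_of_notMem (st_x_not_mem_par htree hx1 hx2 hodd)]
        have : ¬ Odd (T.dist o (stPar T o v)) := by
          rw [Nat.odd_iff] at hodd ⊢; omega
        rw [if_neg this] at hcardpar
        omega
      · rw [stPhi_even htree _ _ _ hodd hvo, if_neg hodd]
        have hoddp : Odd (T.dist o (stPar T o v)) := by
          rw [Nat.odd_iff] at hodd ⊢; omega
        rw [if_pos hoddp] at hcardpar
        have hpo : stPar T o v ≠ o := by
          intro h'; rw [h'] at hoddp; simp [SimpleGraph.dist_self, Nat.odd_iff] at hoddp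
        have hxm : x (stPar T o v) ∈ stPhi T o Yn x b (stPar T o v) := by
          rw [stPhi_odd htree _ _ _ hoddp]; exact Finset.mem_insert_self _ _
        have hS : ((stPhi T o Yn x b (stPar T o v)).erase (x (stPar T o v))).card = k := by
          rw [Finset.card_erase_of_mem hxm, hcardpar]
          omega
        have hpick := stPick_mem (S := (stPhi T o Yn x b (stPar T o v)).erase (x (stPar T o v)))
          (i := (b v : ℕ)) (dft := x v) (by rw [hS]; exact (b v).2)
        rw [Finset.card_erase_of_mem (Finset.mem_of_mem_erase hpick), hcardpar]
        omega

/-- the dropped element at an even vertex. -/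
noncomputable def stDrop (T : SimpleGraph V) (o : V) {n k : ℕ} (Yn : Finset (Fin n))
    (x : V → Fin n) (b : V → Fin k) (v : V) : Fin n :=
  stPick ((stPhi T o Yn x b (stPar T o v)).erase (x (stPar T o v))) (b v) (x v)

lemma st_even_struct (htree : T.IsTree) (hYn : Yn.card = k)
    (hx1 : Set.InjOn x {v : V | Odd (T.dist o v)})
    (hx2 : ∀ v : V, Odd (T.dist o v) → x v ∉ Yn)
    {v : V} (hv : ¬ Odd (T.dist o v)) (hvo : v ≠ o) :
    stPhi T o Yn x b v = (stPhi T o Yn x b (stPar T o v)).erase (stDrop T o Yn x b v) ∧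
    stDrop T o Yn x b v ∈ stPhi T o Yn x b (stPar T o v) ∧
    stDrop T o Yn x b v ≠ x (stPar T o v) := by
  have hpd := stPar_dist htree hvo
  have hoddp : Odd (T.dist o (stPar T o v)) := by
    have h0 := st_dist_pos htree hvo
    rw [Nat.odd_iff] at hv ⊢; omega
  have hpo : stPar T o v ≠ o := by
    intro h'; rw [h'] at hoddp; simp [SimpleGraph.dist_self, Nat.odd_iff] at hoddp
  have hxm : x (stPar T o v) ∈ stPhi T o Yn x b (stPar T o v) := by
    rw [stPhi_odd htree _ _ _ hoddp]; exact Finset.mem_insert_self _ _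
  have hcardpar := st_card (b := b) htree hYn hx1 hx2 (stPar T o v)
  rw [if_pos hoddp] at hcardpar
  have hS : ((stPhi T o Yn x b (stPar T o v)).erase (x (stPar T o v))).card = k := by
    rw [Finset.card_erase_of_mem hxm, hcardpar]
    omega
  have hpick := stPick_mem (S := (stPhi T o Yn x b (stPar T o v)).erase (x (stPar T o v)))
    (i := (b v : ℕ)) (dft := x v) (by rw [hS]; exact (b v).2)
  refine ⟨stPhi_even htree _ _ _ hv hvo, Finset.mem_of_mem_erase hpick, ?_⟩
  exact Finset.ne_of_mem_erase hpick

end Aux4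

section Aux5

variable {V : Type*} [Fintype V] [DecidableEq V] {T : SimpleGraph V} {o : V}
  {n k : ℕ} {Yn : Finset (Fin n)} {x : V → Fin n} {b : V → Fin k}

lemma st_x_mem_even (htree : T.IsTree) (hYn : Yn.card = k)
    (hx1 : Set.InjOn x {v : V | Odd (T.dist o v)})
    (hx2 : ∀ v : V, Odd (T.dist o v) → x v ∉ Yn)
    {v : V} (hv : ¬ Odd (T.dist o v)) (hvo : v ≠ o) :
    x (stPar T o v) ∈ stPhi T o Yn x b v := by
  obtain ⟨h1, h2, h3⟩ := st_even_struct (b := b) htree hYn hx1 hx2 hv hvo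
  have hoddp : Odd (T.dist o (stPar T o v)) := by
    have h0 := st_dist_pos htree hvo
    have hpd := stPar_dist htree hvo
    rw [Nat.odd_iff] at hv ⊢; omega
  have hpo : stPar T o v ≠ o := by
    intro h'; rw [h'] at hoddp; simp [SimpleGraph.dist_self, Nat.odd_iff] at hoddp
  have hxm : x (stPar T o v) ∈ stPhi T o Yn x b (stPar T o v) := by
    rw [stPhi_odd htree _ _ _ hoddp]; exact Finset.mem_insert_self _ _
  rw [h1]
  exact Finset.mem_erase.mpr ⟨fun h => h3 h.symm, hxm⟩

lemma st_inj (htree : T.IsTree) (hYn : Yn.card = k)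
    (hx1 : Set.InjOn x {v : V | Odd (T.dist o v)})
    (hx2 : ∀ v : V, Odd (T.dist o v) → x v ∉ Yn)
    (hb : ∀ P : V, Odd (T.dist o P) → Set.InjOn b (stChild T o P)) :
    Function.Injective (stPhi T o Yn x b) := by
  intro u w heq
  have hcu := st_card (b := b) htree hYn hx1 hx2 u
  have hcw := st_card (b := b) htree hYn hx1 hx2 w
  rw [heq] at hcu
  have hpar : (Odd (T.dist o u) ↔ Odd (T.dist o w)) := by
    constructor <;> intro h <;> by_contra h2
    · rw [if_pos h] at hcu; rw [if_neg h2] at hcw; omega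
    · rw [if_neg h2] at hcu; rw [if_pos h] at hcw; omega
  by_cases hodd : Odd (T.dist o u)
  · -- both odd
    have hoddw := hpar.mp hodd
    have hxm : x u ∈ stPhi T o Yn x b w := by
      rw [← heq, stPhi_odd htree _ _ _ hodd]; exact Finset.mem_insert_self _ _
    obtain ⟨j, hj⟩ := st_memA htree hx1 hx2 w u hodd hxm
    have huo : u ≠ o := by
      intro rfl'; subst rfl'; simp [SimpleGraph.dist_self, Nat.odd_iff] at hodd
    have hd1 := stPar_iter_dist_le htree hj huo
    have hxm' : x w ∈ stPhi T o Yn x b u := by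
      rw [heq, stPhi_odd htree _ _ _ hoddw]; exact Finset.mem_insert_self _ _
    have hwo : w ≠ o := by
      intro rfl'; subst rfl'; simp [SimpleGraph.dist_self, Nat.odd_iff] at hoddw
    obtain ⟨j', hj'⟩ := st_memA htree hx1 hx2 u w hoddw hxm'
    have hd2 := stPar_iter_dist_le htree hj' hwo
    have hj0 : j = 0 := by omega
    rw [hj0] at hj
    exact hj.symm
  · -- both even
    have hoddw : ¬ Odd (T.dist o w) := fun h => hodd (hpar.mpr h)
    by_cases huo : u = o
    · by_cases hwo : w = o
      · exact huo.trans hwo.symm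
      · exfalso
        have hx := st_x_mem_even (b := b) htree hYn hx1 hx2 hoddw hwo
        rw [← heq, huo, stPhi_root] at hx
        have hoddp : Odd (T.dist o (stPar T o w)) := by
          have h0 := st_dist_pos htree hwo
          have hpd := stPar_dist htree hwo
          rw [Nat.odd_iff] at hoddw ⊢; omega
        exact hx2 _ hoddp hx
    · by_cases hwo : w = o
      · exfalso
        have hx := st_x_mem_even (b := b) htree hYn hx1 hx2 hodd huo
        rw [heq, hwo, stPhi_root] at hx
        have hoddp : Odd (T.dist o (stPar T o u)) := by
          have h0 := st_dist_pos htree huo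
          have hpd := stPar_dist htree huo
          rw [Nat.odd_iff] at hodd ⊢; omega
        exact hx2 _ hoddp hx
      · -- both even, nonroot
        have hpdu := stPar_dist htree huo
        have hpdw := stPar_dist htree hwo
        have hoddpu : Odd (T.dist o (stPar T o u)) := by
          have h0 := st_dist_pos htree huo
          rw [Nat.odd_iff] at hodd ⊢; omega
        have hoddpw : Odd (T.dist o (stPar T o w)) := by
          have h0 := st_dist_pos htree hwo
          rw [Nat.odd_iff] at hoddw ⊢; omega
        have hpuo : stPar T o u ≠ o := by
          intro h'; rw [h'] at hoddpu; simp [SimpleGraph.dist_self, Nat.odd_iff] at hoddpu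
        have hpwo : stPar T o w ≠ o := by
          intro h'; rw [h'] at hoddpw; simp [SimpleGraph.dist_self, Nat.odd_iff] at hoddpw
        have hxu : x (stPar T o u) ∈ stPhi T o Yn x b w := by
          rw [← heq]; exact st_x_mem_even (b := b) htree hYn hx1 hx2 hodd huo
        have hxw : x (stPar T o w) ∈ stPhi T o Yn x b u := by
          rw [heq]; exact st_x_mem_even (b := b) htree hYn hx1 hx2 hoddw hwo
        obtain ⟨j, hj⟩ := st_memA htree hx1 hx2 w (stPar T o u) hoddpu hxu
        obtain ⟨j', hj'⟩ := st_memA htree hx1 hx2 u (stPar T o w) hoddpw hxw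
        have hd1 := stPar_iter_dist_le htree hj hpuo
        have hd2 := stPar_iter_dist_le htree hj' hpwo
        have hjpos : j ≠ 0 := by
          intro h0
          subst h0
          rw [Function.iterate_zero_apply] at hj
          rw [← hj] at hoddpu
          rw [Nat.odd_iff] at hoddpu hoddw
          omega
        have hjpos' : j' ≠ 0 := by
          intro h0
          subst h0
          rw [Function.iterate_zero_apply] at hj'
          rw [← hj'] at hoddpw
          rw [Nat.odd_iff] at hoddpw hodd
          omega
        have hj1 : j = 1 := by omega
        rw [hj1] at hj
        simp only [Function.iterate_one] at hj
        -- parents equal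
        have hPP : stPar T o u = stPar T o w := hj.symm
        obtain ⟨e1u, e2u, e3u⟩ := st_even_struct (b := b) htree hYn hx1 hx2 hodd huo
        obtain ⟨e1w, e2w, e3w⟩ := st_even_struct (b := b) htree hYn hx1 hx2 hoddw hwo
        have hdrop : stDrop T o Yn x b u = stDrop T o Yn x b w := by
          have hnm : stDrop T o Yn x b u ∉ stPhi T o Yn x b u := by
            rw [e1u]; exact Finset.notMem_erase _ _
          rw [heq, e1w] at hnm
          rw [hPP] at e2u
          by_contra hne
          exact hnm (Finset.mem_erase.mpr ⟨hne, e2u⟩)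
        -- same pick set
        have hcardP := st_card (b := b) htree hYn hx1 hx2 (stPar T o u)
        rw [if_pos hoddpu] at hcardP
        have hxmP : x (stPar T o u) ∈ stPhi T o Yn x b (stPar T o u) := by
          rw [stPhi_odd htree _ _ _ hoddpu]; exact Finset.mem_insert_self _ _
        have hScard : ((stPhi T o Yn x b (stPar T o u)).erase (x (stPar T o u))).card = k := by
          rw [Finset.card_erase_of_mem hxmP, hcardP]
          omega
        have hbu : b u = b w := by
          have := stPick_inj (S := (stPhi T o Yn x b (stPar T o u)).erase (x (stPar T o u)))
            (i := (b u : ℕ)) (j := (b w : ℕ)) (dft := x u) (dft' := x w)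
            (by rw [hScard]; exact (b u).2) (by rw [hScard]; exact (b w).2) ?_
          · exact Fin.ext this
          · have : stDrop T o Yn x b u = stDrop T o Yn x b w := hdrop
            rw [stDrop, stDrop, ← hPP] at this
            exact this
        -- both are children of the common parent
        have hcu' : u ∈ stChild T o (stPar T o u) := st_mem_child htree huo
        have hcw' : w ∈ stChild T o (stPar T o u) := by
          rw [hPP]; exact st_mem_child htree hwo
        exact hb (stPar T o u) hoddpu hcu' hcw' hbu

end Aux5

section Aux6

variable {V : Type*} [Fintype V] [DecidableEq V] {T : SimpleGraph V} {o : V}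
  {n k : ℕ} {Yn : Finset (Fin n)} {x : V → Fin n} {b : V → Fin k}

lemma st_forward (htree : T.IsTree) (hYn : Yn.card = k)
    (hx1 : Set.InjOn x {v : V | Odd (T.dist o v)})
    (hx2 : ∀ v : V, Odd (T.dist o v) → x v ∉ Yn)
    {u v : V} (h : T.Adj u v) :
    (Lgraph n k).Adj (stPhi T o Yn x b u) (stPhi T o Yn x b v) := by
  have key : ∀ a c : V, T.Adj a c → T.dist o a + 1 = T.dist o c →
      (Lgraph n k).Adj (stPhi T o Yn x b a) (stPhi T o Yn x b c) := by
    intro a c hac hd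
    have hco : c ≠ o := by
      intro rfl'; subst rfl'; simp [SimpleGraph.dist_self] at hd
    have hpar : a = stPar T o c := st_parent_unique htree hac.symm hd
    have hca := st_card (b := b) htree hYn hx1 hx2 a
    have hcc := st_card (b := b) htree hYn hx1 hx2 c
    by_cases hodd : Odd (T.dist o c)
    · -- c odd, a = parent: φ a ⊆ φ c
      have hsub : stPhi T o Yn x b a ⊆ stPhi T o Yn x b c := by
        rw [stPhi_odd htree _ _ _ hodd, ← hpar]
        exact Finset.subset_insert _ _
      have hodda : ¬ Odd (T.dist o a) := by rw [Nat.odd_iff] at hodd ⊢; omega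
      rw [if_neg hodda] at hca
      rw [if_pos hodd] at hcc
      exact Or.inl ⟨hca, hcc, hsub⟩
    · -- c even, a = parent odd: φ c ⊆ φ a
      obtain ⟨e1, e2, e3⟩ := st_even_struct (b := b) htree hYn hx1 hx2 hodd hco
      have hsub : stPhi T o Yn x b c ⊆ stPhi T o Yn x b a := by
        rw [e1, ← hpar]
        exact Finset.erase_subset _ _
      have hodda : Odd (T.dist o a) := by rw [Nat.odd_iff] at hodd ⊢; omega
      rw [if_pos hodda] at hca
      rw [if_neg hodd] at hcc
      exact Or.inr ⟨hcc, hca, hsub⟩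
  rcases st_adj_dist_cases htree (o := o) h with hd | hd
  · exact key u v h hd
  · exact ((Lgraph n k).adj_symm (key v u h.symm hd))

lemma st_backward (htree : T.IsTree) (hYn : Yn.card = k)
    (hx1 : Set.InjOn x {v : V | Odd (T.dist o v)})
    (hx2 : ∀ v : V, Odd (T.dist o v) → x v ∉ Yn)
    (hb : ∀ P : V, Odd (T.dist o P) → Set.InjOn b (stChild T o P))
    {u w : V} (h : (Lgraph n k).Adj (stPhi T o Yn x b u) (stPhi T o Yn x b w)) :
    T.Adj u w := by
  have key : ∀ a c : V, (stPhi T o Yn x b a).card = k →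
      (stPhi T o Yn x b c).card = k + 1 →
      stPhi T o Yn x b a ⊆ stPhi T o Yn x b c → T.Adj a c := by
    intro a c hka hkc hsub
    have hca := st_card (b := b) htree hYn hx1 hx2 a
    have hcc := st_card (b := b) htree hYn hx1 hx2 c
    have hodda : ¬ Odd (T.dist o a) := by
      intro hodd; rw [if_pos hodd] at hca; omega
    have hoddc : Odd (T.dist o c) := by
      by_contra hodd; rw [if_neg hodd] at hcc; omega
    have hco : c ≠ o := by
      intro rfl'; subst rfl'; simp [SimpleGraph.dist_self, Nat.odd_iff] at hoddc
    by_cases hxc : x c ∈ stPhi T o Yn x b a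
    · -- x c ∈ φ a : c is an ancestor of a; show c = parent of a
      obtain ⟨j, hj⟩ := st_memA htree hx1 hx2 a c hoddc hxc
      have hd1 := stPar_iter_dist_le htree hj hco
      have hao : a ≠ o := by
        intro haoeq
        rw [haoeq, stPar_iter_root] at hj
        exact hco hj.symm
      have hjpos : j ≠ 0 := by
        intro h0
        subst h0
        rw [Function.iterate_zero_apply] at hj
        rw [hj] at hodda
        exact hodda hoddc
      rcases eq_or_ne j 1 with hj1 | hj1
      · subst hj1
        rw [Function.iterate_one] at hj
        rw [← hj]
        exact stPar_adj htree hao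
      · -- j ≥ 2 : contradiction
        exfalso
        have hpda := stPar_dist htree hao
        have hpdc := stPar_dist htree hco
        have hoddpa : Odd (T.dist o (stPar T o a)) := by
          have h0 := st_dist_pos htree hao
          rw [Nat.odd_iff] at hodda ⊢; omega
        have hpao : stPar T o a ≠ o := by
          intro h'; rw [h'] at hoddpa
          simp [SimpleGraph.dist_self, Nat.odd_iff] at hoddpa
        have hxpa : x (stPar T o a) ∈ stPhi T o Yn x b a :=
          st_x_mem_even (b := b) htree hYn hx1 hx2 hodda hao
        have hxpc : x (stPar T o a) ∈ stPhi T o Yn x b c := hsub hxpa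
        rw [stPhi_odd htree _ _ _ hoddc] at hxpc
        rcases Finset.mem_insert.mp hxpc with heq' | hmem'
        · have : stPar T o a = c := hx1 hoddpa hoddc heq'
          rw [← this] at hd1
          -- dist (par a) + j = dist a  and dist(par a) + 1 = dist a with j ≥ 2
          omega
        · obtain ⟨j2, hj2⟩ := st_memA htree hx1 hx2 (stPar T o c) (stPar T o a) hoddpa hmem'
          have hd2 := stPar_iter_dist_le htree hj2 hpao
          omega
    · -- x c ∉ φ a : φ a = φ (par c), so a = par c
      have hsub2 : stPhi T o Yn x b a ⊆ stPhi T o Yn x b (stPar T o c) := by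
        intro e he
        have := hsub he
        rw [stPhi_odd htree _ _ _ hoddc] at this
        rcases Finset.mem_insert.mp this with h' | h'
        · exact absurd (h' ▸ he) hxc
        · exact h'
      have hoddpc : ¬ Odd (T.dist o (stPar T o c)) := by
        have := stPar_dist htree hco
        rw [Nat.odd_iff] at hoddc ⊢; omega
      have hcpc := st_card (b := b) htree hYn hx1 hx2 (stPar T o c)
      rw [if_neg hoddpc] at hcpc
      have heq2 : stPhi T o Yn x b a = stPhi T o Yn x b (stPar T o c) :=
        Finset.eq_of_subset_of_card_le hsub2 (by omega)
      have : a = stPar T o c := st_inj htree hYn hx1 hx2 hb heq2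
      rw [this]
      exact (stPar_adj htree hco).symm
  rcases h with ⟨h1, h2, h3⟩ | ⟨h1, h2, h3⟩
  · exact key u w h1 h2 h3
  · exact (key w u h1 h2 h3).symm

end Aux6

section Aux7

variable {V : Type*} [Fintype V] [DecidableEq V] {T : SimpleGraph V} {o : V}
  {n k : ℕ} {Yn : Finset (Fin n)}

/-- the element added at an odd vertex of a valid embedding -/
noncomputable def stX (T : SimpleGraph V) (o : V) {n : ℕ} (φ : V → Finset (Fin n))
    (z : Fin n) (v : V) : Fin n :=
  (φ v \ φ (stPar T o v)).toList.getD 0 z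

/-- the element dropped at an even vertex of a valid embedding -/
noncomputable def stD (T : SimpleGraph V) (o : V) {n : ℕ} (φ : V → Finset (Fin n))
    (z : Fin n) (v : V) : Fin n :=
  (φ (stPar T o v) \ φ v).toList.getD 0 z

variable {φ : V → Finset (Fin n)} {z : Fin n}

lemma st_vcard (htree : T.IsTree) (hYn : Yn.card = k) (hroot : φ o = Yn)
    (hiff : ∀ u v : V, T.Adj u v ↔ (Lgraph n k).Adj (φ u) (φ v)) :
    ∀ v : V, (φ v).card = if Odd (T.dist o v) then k + 1 else k := by
  suffices H : ∀ (d : ℕ) (v : V), T.dist o v ≤ d →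
      (φ v).card = if Odd (T.dist o v) then k + 1 else k by
    exact fun v => H (T.dist o v) v le_rfl
  intro d
  induction d with
  | zero =>
    intro v hd
    have hvo : v = o := st_dist_eq_zero htree (by omega)
    subst hvo
    rw [hroot]
    simp [SimpleGraph.dist_self, Nat.odd_iff, hYn]
  | succ d IH =>
    intro v hd
    by_cases hvo : v = o
    · subst hvo
      rw [hroot]
      simp [SimpleGraph.dist_self, Nat.odd_iff, hYn]
    · have hpd := stPar_dist htree hvo
      have hcp := IH (stPar T o v) (by omega)
      have hadj : T.Adj v (stPar T o v) := stPar_adj htree hvo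
      have hL := (hiff _ _).mp hadj
      by_cases hodd : Odd (T.dist o v)
      · have hoddp : ¬ Odd (T.dist o (stPar T o v)) := by
          rw [Nat.odd_iff] at hodd ⊢; omega
        rw [if_neg hoddp] at hcp
        rw [if_pos hodd]
        rcases hL with ⟨h1, h2, h3⟩ | ⟨h1, h2, h3⟩
        · omega
        · omega
      · have hoddp : Odd (T.dist o (stPar T o v)) := by
          have h0 := st_dist_pos htree hvo
          rw [Nat.odd_iff] at hodd ⊢; omega
        rw [if_pos hoddp] at hcp
        rw [if_neg hodd]
        rcases hL with ⟨h1, h2, h3⟩ | ⟨h1, h2, h3⟩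
        · omega
        · omega

lemma st_vsub (htree : T.IsTree) (hYn : Yn.card = k) (hroot : φ o = Yn)
    (hiff : ∀ u v : V, T.Adj u v ↔ (Lgraph n k).Adj (φ u) (φ v))
    {v : V} (hvo : v ≠ o) :
    (Odd (T.dist o v) → φ (stPar T o v) ⊆ φ v) ∧
    (¬ Odd (T.dist o v) → φ v ⊆ φ (stPar T o v)) := by
  have hpd := stPar_dist htree hvo
  have hcv := st_vcard htree hYn hroot hiff v
  have hcp := st_vcard htree hYn hroot hiff (stPar T o v)
  have hadj : T.Adj v (stPar T o v) := stPar_adj htree hvo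
  have hL := (hiff _ _).mp hadj
  constructor
  · intro hodd
    have hoddp : ¬ Odd (T.dist o (stPar T o v)) := by
      rw [Nat.odd_iff] at hodd ⊢; omega
    rw [if_pos hodd] at hcv
    rw [if_neg hoddp] at hcp
    rcases hL with ⟨h1, h2, h3⟩ | ⟨h1, h2, h3⟩
    · omega
    · exact h3
  · intro hodd
    have hoddp : Odd (T.dist o (stPar T o v)) := by
      have h0 := st_dist_pos htree hvo
      rw [Nat.odd_iff] at hodd ⊢; omega
    rw [if_neg hodd] at hcv
    rw [if_pos hoddp] at hcp
    rcases hL with ⟨h1, h2, h3⟩ | ⟨h1, h2, h3⟩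
    · exact h3
    · omega

lemma st_vodd_struct (htree : T.IsTree) (hYn : Yn.card = k) (hroot : φ o = Yn)
    (hiff : ∀ u v : V, T.Adj u v ↔ (Lgraph n k).Adj (φ u) (φ v))
    {v : V} (hodd : Odd (T.dist o v)) :
    φ v = insert (stX T o φ z v) (φ (stPar T o v)) ∧
      stX T o φ z v ∉ φ (stPar T o v) := by
  have hvo : v ≠ o := by
    intro rfl'; subst rfl'; simp [SimpleGraph.dist_self, Nat.odd_iff] at hodd
  have hsub := (st_vsub htree hYn hroot hiff hvo).1 hodd
  have hcv := st_vcard htree hYn hroot hiff v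
  have hcp := st_vcard htree hYn hroot hiff (stPar T o v)
  rw [if_pos hodd] at hcv
  have hoddp : ¬ Odd (T.dist o (stPar T o v)) := by
    have hpd := stPar_dist htree hvo
    rw [Nat.odd_iff] at hodd ⊢; omega
  rw [if_neg hoddp] at hcp
  have hcard : (φ v \ φ (stPar T o v)).card = 1 := by
    rw [Finset.card_sdiff_of_subset hsub]; omega
  obtain ⟨a, ha⟩ := Finset.card_eq_one.mp hcard
  have hX : stX T o φ z v = a := by
    rw [stX, ha, Finset.toList_singleton]
    rfl
  rw [hX]
  have hmem : a ∈ φ v \ φ (stPar T o v) := by rw [ha]; exact Finset.mem_singleton_self a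
  rw [Finset.mem_sdiff] at hmem
  constructor
  · apply Finset.eq_of_subset_of_card_le
    · intro e he
      by_cases h : e ∈ φ (stPar T o v)
      · exact Finset.mem_insert_of_mem h
      · have he2 : e ∈ φ v \ φ (stPar T o v) := Finset.mem_sdiff.mpr ⟨he, h⟩
        rw [ha, Finset.mem_singleton] at he2
        exact Finset.mem_insert.mpr (Or.inl he2)
    · rw [Finset.card_insert_of_notMem hmem.2]
      omega
  · exact hmem.2

end Aux7

section Aux8

variable {V : Type*} [Fintype V] [DecidableEq V] {T : SimpleGraph V} {o : V}
  {n k : ℕ} {Yn : Finset (Fin n)} {φ : V → Finset (Fin n)} {z : Fin n}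

lemma st_veven_struct (htree : T.IsTree) (hYn : Yn.card = k)
    (hinj : Function.Injective φ) (hroot : φ o = Yn)
    (hiff : ∀ u v : V, T.Adj u v ↔ (Lgraph n k).Adj (φ u) (φ v))
    {v : V} (hodd : ¬ Odd (T.dist o v)) (hvo : v ≠ o) :
    φ v = (φ (stPar T o v)).erase (stD T o φ z v) ∧
      stD T o φ z v ∈ φ (stPar T o v) ∧
      stD T o φ z v ≠ stX T o φ z (stPar T o v) := by
  have hsub := (st_vsub htree hYn hroot hiff hvo).2 hodd
  have hcv := st_vcard htree hYn hroot hiff v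
  have hcp := st_vcard htree hYn hroot hiff (stPar T o v)
  rw [if_neg hodd] at hcv
  have hpd := stPar_dist htree hvo
  have hoddp : Odd (T.dist o (stPar T o v)) := by
    have h0 := st_dist_pos htree hvo
    rw [Nat.odd_iff] at hodd ⊢; omega
  rw [if_pos hoddp] at hcp
  have hcard : (φ (stPar T o v) \ φ v).card = 1 := by
    rw [Finset.card_sdiff_of_subset hsub]; omega
  obtain ⟨a, ha⟩ := Finset.card_eq_one.mp hcard
  have hD : stD T o φ z v = a := by
    rw [stD, ha, Finset.toList_singleton]
    rfl
  rw [hD]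
  have hmem : a ∈ φ (stPar T o v) \ φ v := by rw [ha]; exact Finset.mem_singleton_self a
  rw [Finset.mem_sdiff] at hmem
  have heq : φ v = (φ (stPar T o v)).erase a := by
    apply Finset.eq_of_subset_of_card_le
    · intro e he
      refine Finset.mem_erase.mpr ⟨?_, hsub he⟩
      intro h'
      rw [h'] at he
      exact hmem.2 he
    · rw [Finset.card_erase_of_mem hmem.1]
      omega
  refine ⟨heq, hmem.1, ?_⟩
  -- a ≠ stX (par v), else φ v = φ (par (par v)), contradicting injectivity
  intro hax
  have hpo : stPar T o v ≠ o := by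
    intro h'; rw [h'] at hoddp; simp [SimpleGraph.dist_self, Nat.odd_iff] at hoddp
  obtain ⟨hins, hnm⟩ := st_vodd_struct (z := z) htree hYn hroot hiff hoddp
  have : φ v = φ (stPar T o (stPar T o v)) := by
    rw [heq, hax, hins]
    rw [Finset.erase_insert hnm]
  have hvv := hinj this
  have hpd2 := stPar_dist htree hpo
  have hdd := congrArg (T.dist o) hvv
  omega

/-- reconstruction: a valid embedding is determined by the added elements and
the indices of the dropped elements. -/
lemma st_reconstruct {φ2 : V → Finset (Fin n)} (htree : T.IsTree) (hYn : Yn.card = k)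
    (hinj : Function.Injective φ) (hroot : φ o = Yn)
    (hiff : ∀ u v : V, T.Adj u v ↔ (Lgraph n k).Adj (φ u) (φ v))
    (hinj2 : Function.Injective φ2) (hroot2 : φ2 o = Yn)
    (hiff2 : ∀ u v : V, T.Adj u v ↔ (Lgraph n k).Adj (φ2 u) (φ2 v))
    (hX : ∀ v : V, Odd (T.dist o v) → stX T o φ z v = stX T o φ2 z v)
    (hD : ∀ v : V, ¬ Odd (T.dist o v) → v ≠ o →
      List.idxOf (stD T o φ z v)
        (((φ (stPar T o v)).erase (stX T o φ z (stPar T o v))).sort (· ≤ ·)) =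
      List.idxOf (stD T o φ2 z v)
        (((φ2 (stPar T o v)).erase (stX T o φ2 z (stPar T o v))).sort (· ≤ ·))) :
    φ = φ2 := by
  suffices H : ∀ (d : ℕ) (v : V), T.dist o v ≤ d → φ v = φ2 v by
    funext v; exact H (T.dist o v) v le_rfl
  intro d
  induction d with
  | zero =>
    intro v hd
    have hvo : v = o := st_dist_eq_zero htree (by omega)
    subst hvo
    rw [hroot, hroot2]
  | succ d IH =>
    intro v hd
    by_cases hvo : v = o
    · subst hvo; rw [hroot, hroot2]
    · have hpd := stPar_dist htree hvo
      have hIH : φ (stPar T o v) = φ2 (stPar T o v) := IH _ (by omega)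
      by_cases hodd : Odd (T.dist o v)
      · obtain ⟨h1, _⟩ := st_vodd_struct (z := z) htree hYn hroot hiff hodd
        obtain ⟨h2, _⟩ := st_vodd_struct (z := z) htree hYn hroot2 hiff2 hodd
        rw [h1, h2, hIH, hX v hodd]
      · obtain ⟨h1, hm1, hne1⟩ := st_veven_struct (z := z) htree hYn hinj hroot hiff hodd hvo
        obtain ⟨h2, hm2, hne2⟩ := st_veven_struct (z := z) htree hYn hinj2 hroot2 hiff2 hodd hvo
        have hoddp : Odd (T.dist o (stPar T o v)) := by
          have h0 := st_dist_pos htree hvo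
          rw [Nat.odd_iff] at hodd ⊢; omega
        have hXp : stX T o φ z (stPar T o v) = stX T o φ2 z (stPar T o v) := hX _ hoddp
        have hDeq : stD T o φ z v = stD T o φ2 z v := by
          have hmem1 : stD T o φ z v ∈
              ((φ (stPar T o v)).erase (stX T o φ z (stPar T o v))).sort (· ≤ ·) := by
            rw [Finset.mem_sort]
            exact Finset.mem_erase.mpr ⟨hne1, hm1⟩
          have hmem2 : stD T o φ2 z v ∈
              ((φ2 (stPar T o v)).erase (stX T o φ2 z (stPar T o v))).sort (· ≤ ·) := by
            rw [Finset.mem_sort]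
            exact Finset.mem_erase.mpr ⟨hne2, hm2⟩
          have hlists : ((φ (stPar T o v)).erase (stX T o φ z (stPar T o v))).sort (· ≤ ·) =
              ((φ2 (stPar T o v)).erase (stX T o φ2 z (stPar T o v))).sort (· ≤ ·) := by
            rw [hIH, hXp]
          have hidx := hD v hodd hvo
          have e1 := List.idxOf_lt_length_iff.mpr hmem1
          have e2 := List.idxOf_lt_length_iff.mpr hmem2
          have hget1 : (((φ (stPar T o v)).erase (stX T o φ z (stPar T o v))).sort (· ≤ ·)).getD
              (List.idxOf (stD T o φ z v)
                (((φ (stPar T o v)).erase (stX T o φ z (stPar T o v))).sort (· ≤ ·))) z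
              = stD T o φ z v := by
            rw [List.getD_eq_getElem _ _ e1]
            exact List.getElem_idxOf e1
          have hget2 : (((φ2 (stPar T o v)).erase (stX T o φ2 z (stPar T o v))).sort (· ≤ ·)).getD
              (List.idxOf (stD T o φ2 z v)
                (((φ2 (stPar T o v)).erase (stX T o φ2 z (stPar T o v))).sort (· ≤ ·))) z
              = stD T o φ2 z v := by
            rw [List.getD_eq_getElem _ _ e2]
            exact List.getElem_idxOf e2
          rw [← hget1, ← hget2, hidx, hlists]
        rw [h1, h2, hIH, hDeq]

end Aux8

section Aux9

variable {V : Type*} [Fintype V] [DecidableEq V]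

lemma st_upper_bound {T : SimpleGraph V} {o : V} {n k : ℕ} {Yn : Finset (Fin n)}
    (htree : T.IsTree) (hk : 1 ≤ k) (hYn : Yn.card = k)
    (hsemi : ∀ v : V, Odd (T.dist o v) → Set.ncard {w : V | T.Adj v w} = k + 1) :
    Nat.card {φ : V → Finset (Fin n) //
          Function.Injective φ ∧ φ o = Yn ∧
          (∀ v : V, (φ v).card = k ∨ (φ v).card = k + 1) ∧
          ∀ u v : V, T.Adj u v ↔ (Lgraph n k).Adj (φ u) (φ v)}
      ≤ Nat.factorial k ^ (Set.ncard {v : V | Odd (T.dist o v)}) *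
          n ^ (Set.ncard {v : V | Odd (T.dist o v)}) := by
  classical
  have hn : 0 < n := by
    have h1 : Yn.card ≤ n := by simpa using Finset.card_le_univ Yn
    omega
  obtain ⟨z, -⟩ : Yn.Nonempty := Finset.card_pos.mp (by omega)
  -- helper facts about parents of even non-root vertices
  have hoddpar : ∀ c : V, ¬ Odd (T.dist o c) → c ≠ o → Odd (T.dist o (stPar T o c)) := by
    intro c hodd hco
    have hpd := stPar_dist htree hco
    have h0 := st_dist_pos htree hco
    rw [Nat.odd_iff] at hodd ⊢; omega
  have hchildfacts : ∀ (P : V), Odd (T.dist o P) → ∀ c ∈ stChild T o P,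
      ¬ Odd (T.dist o c) ∧ c ≠ o ∧ stPar T o c = P := by
    intro P hP c hc
    obtain ⟨hpar, hco⟩ := stChild_par htree hc
    have hd : T.dist o c = T.dist o P + 1 := hc.2
    refine ⟨?_, hco, hpar⟩
    rw [Nat.odd_iff] at hP ⊢; omega
  have key : ∀ (φ : V → Finset (Fin n)), Function.Injective φ → φ o = Yn →
      (∀ u v : V, T.Adj u v ↔ (Lgraph n k).Adj (φ u) (φ v)) →
      ∀ c : V, ¬ Odd (T.dist o c) → c ≠ o →
        stD T o φ z c ∈ ((φ (stPar T o c)).erase (stX T o φ z (stPar T o c))) ∧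
        (((φ (stPar T o c)).erase (stX T o φ z (stPar T o c))).card = k) := by
    intro φ hinj hroot hiff c hodd hco
    have hoddp := hoddpar c hodd hco
    obtain ⟨e1, e2, e3⟩ := st_veven_struct (z := z) htree hYn hinj hroot hiff hodd hco
    obtain ⟨f1, f2⟩ := st_vodd_struct (z := z) htree hYn hroot hiff hoddp
    have hxm : stX T o φ z (stPar T o c) ∈ φ (stPar T o c) := by
      rw [f1]; exact Finset.mem_insert_self _ _
    have hcP := st_vcard htree hYn hroot hiff (stPar T o c)
    rw [if_pos hoddp] at hcP
    refine ⟨Finset.mem_erase.mpr ⟨e3, e2⟩, ?_⟩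
    rw [Finset.card_erase_of_mem hxm, hcP]
    omega
  -- the encoding function
  have hf : ∃ f : {φ : V → Finset (Fin n) //
          Function.Injective φ ∧ φ o = Yn ∧
          (∀ v : V, (φ v).card = k ∨ (φ v).card = k + 1) ∧
          ∀ u v : V, T.Adj u v ↔ (Lgraph n k).Adj (φ u) (φ v)} →
        (({v : V // Odd (T.dist o v)} → Fin n) ×
          ((v : {v : V // Odd (T.dist o v)}) → ({w : V // w ∈ stChild T o v.1} ↪ Fin k))),
      Function.Injective f := by
    refine ⟨fun ψ => (fun v => stX T o ψ.1 z v.1, fun v =>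
      ⟨fun c => ⟨List.idxOf (stD T o ψ.1 z c.1)
          (((ψ.1 (stPar T o c.1)).erase (stX T o ψ.1 z (stPar T o c.1))).sort (· ≤ ·)), ?_⟩,
        ?_⟩), ?_⟩
    · -- the index is < k
      obtain ⟨hc1, hc2, hc3⟩ := hchildfacts v.1 v.2 c.1 c.2
      obtain ⟨hm, hcard⟩ := key ψ.1 ψ.2.1 ψ.2.2.1 ψ.2.2.2.2 c.1 hc1 hc2
      have := List.idxOf_lt_length_iff.mpr ((Finset.mem_sort (· ≤ ·)).mpr hm)
      rwa [Finset.length_sort, hcard] at this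
    · -- injectivity in the child
      intro c1 c2 hceq
      obtain ⟨hc11, hc12, hc13⟩ := hchildfacts v.1 v.2 c1.1 c1.2
      obtain ⟨hc21, hc22, hc23⟩ := hchildfacts v.1 v.2 c2.1 c2.2
      have hidx : List.idxOf (stD T o ψ.1 z c1.1)
          (((ψ.1 (stPar T o c1.1)).erase (stX T o ψ.1 z (stPar T o c1.1))).sort (· ≤ ·)) =
          List.idxOf (stD T o ψ.1 z c2.1)
          (((ψ.1 (stPar T o c2.1)).erase (stX T o ψ.1 z (stPar T o c2.1))).sort (· ≤ ·)) :=
        congrArg Fin.val hceq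
      obtain ⟨hm1, hcard1⟩ := key ψ.1 ψ.2.1 ψ.2.2.1 ψ.2.2.2.2 c1.1 hc11 hc12
      obtain ⟨hm2, hcard2⟩ := key ψ.1 ψ.2.1 ψ.2.2.1 ψ.2.2.2.2 c2.1 hc21 hc22
      have hDeq : stD T o ψ.1 z c1.1 = stD T o ψ.1 z c2.1 := by
        have e1 := List.idxOf_lt_length_iff.mpr ((Finset.mem_sort (· ≤ ·)).mpr hm1)
        have e2 := List.idxOf_lt_length_iff.mpr ((Finset.mem_sort (· ≤ ·)).mpr hm2)
        have hg1 : (((ψ.1 (stPar T o c1.1)).erase (stX T o ψ.1 z (stPar T o c1.1))).sort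
            (· ≤ ·)).getD (List.idxOf (stD T o ψ.1 z c1.1)
            (((ψ.1 (stPar T o c1.1)).erase (stX T o ψ.1 z (stPar T o c1.1))).sort (· ≤ ·))) z
            = stD T o ψ.1 z c1.1 := by
          rw [List.getD_eq_getElem _ _ e1]
          exact List.getElem_idxOf e1
        have hg2 : (((ψ.1 (stPar T o c2.1)).erase (stX T o ψ.1 z (stPar T o c2.1))).sort
            (· ≤ ·)).getD (List.idxOf (stD T o ψ.1 z c2.1)
            (((ψ.1 (stPar T o c2.1)).erase (stX T o ψ.1 z (stPar T o c2.1))).sort (· ≤ ·))) z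
            = stD T o ψ.1 z c2.1 := by
          rw [List.getD_eq_getElem _ _ e2]
          exact List.getElem_idxOf e2
        rw [← hg1, ← hg2, hidx, hc13, hc23]
      obtain ⟨g1, -, -⟩ := st_veven_struct (z := z) htree hYn ψ.2.1 ψ.2.2.1 ψ.2.2.2.2 hc11 hc12
      obtain ⟨g2, -, -⟩ := st_veven_struct (z := z) htree hYn ψ.2.1 ψ.2.2.1 ψ.2.2.2.2 hc21 hc22
      have : ψ.1 c1.1 = ψ.1 c2.1 := by
        rw [g1, g2, hDeq, hc13, hc23]
      exact Subtype.ext (ψ.2.1 this)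
    · -- global injectivity
      intro ψ1 ψ2 heq
      have h1 := congrArg Prod.fst heq
      have h2 := congrArg Prod.snd heq
      simp only at h1 h2
      apply Subtype.ext
      refine st_reconstruct (z := z) htree hYn ψ1.2.1 ψ1.2.2.1 ψ1.2.2.2.2
        ψ2.2.1 ψ2.2.2.1 ψ2.2.2.2.2 ?_ ?_
      · intro v hv
        exact congrFun h1 ⟨v, hv⟩
      · intro v hv hvo
        have hP := hoddpar v hv hvo
        have hc : v ∈ stChild T o (stPar T o v) := st_mem_child htree hvo
        have := congrFun h2 ⟨stPar T o v, hP⟩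
        have := congrFun (congrArg (fun (e : _ ↪ Fin k) => (e : _ → Fin k)) this) ⟨v, hc⟩
        exact congrArg Fin.val this
  obtain ⟨f, hfinj⟩ := hf
  refine le_trans (Nat.card_le_card_of_injective f hfinj) (le_of_eq ?_)
  -- compute the cardinality of the codomain
  rw [Nat.card_prod, Nat.card_fun, Nat.card_pi]
  have hOD : Nat.card {v : V // Odd (T.dist o v)} = Set.ncard {v : V | Odd (T.dist o v)} :=
    Nat.card_coe_set_eq _
  have hCH : ∀ v : {v : V // Odd (T.dist o v)},
      Nat.card ({w : V // w ∈ stChild T o v.1} ↪ Fin k) = Nat.factorial k := by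
    intro v
    have hvo : v.1 ≠ o := by
      intro h'
      have := v.2
      rw [h'] at this
      simp [SimpleGraph.dist_self, Nat.odd_iff] at this
    have hCHcard : Fintype.card {w : V // w ∈ stChild T o v.1} = k := by
      rw [← Nat.card_eq_fintype_card, Nat.card_coe_set_eq]
      exact stChild_ncard htree (hsemi v.1 v.2) hvo
    rw [Nat.card_eq_fintype_card, Fintype.card_embedding_eq, hCHcard, Fintype.card_fin,
      Nat.descFactorial_self]
  rw [Finset.prod_congr rfl (fun v _ => hCH v), Finset.prod_const, Finset.card_univ,
    ← Nat.card_eq_fintype_card, hOD]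
  rw [Nat.card_eq_fintype_card (α := Fin n), Fintype.card_fin]
  ring

end Aux9

section Aux10

variable {V : Type*} [Fintype V] [DecidableEq V]

/-- extend an assignment on odd vertices to all of `V` -/
noncomputable def stXof (T : SimpleGraph V) (o : V) {n : ℕ} {Yn : Finset (Fin n)} (z : Fin n)
    (p1 : {v : V // Odd (T.dist o v)} → {a : Fin n // a ∉ Yn}) : V → Fin n :=
  fun v => if h : Odd (T.dist o v) then (p1 ⟨v, h⟩).1 else z

/-- extend child-index assignments to all of `V` -/
noncomputable def stBof (T : SimpleGraph V) (o : V) {k : ℕ} (d : Fin k)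
    (p2 : (v : {v : V // Odd (T.dist o v)}) → ({w : V // w ∈ stChild T o v.1} → Fin k)) :
    V → Fin k :=
  fun c => if h : Odd (T.dist o (stPar T o c)) ∧ c ∈ stChild T o (stPar T o c) then
    p2 ⟨stPar T o c, h.1⟩ ⟨c, h.2⟩ else d

lemma stBof_spec {T : SimpleGraph V} {o : V} (htree : T.IsTree) {k : ℕ} (d : Fin k)
    (p2 : (v : {v : V // Odd (T.dist o v)}) → ({w : V // w ∈ stChild T o v.1} → Fin k))
    (P : V) (hP : Odd (T.dist o P)) (c : V) (hc : c ∈ stChild T o P) :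
    stBof T o d p2 c = p2 ⟨P, hP⟩ ⟨c, hc⟩ := by
  obtain ⟨hpar, hco⟩ := stChild_par htree hc
  subst hpar
  simp only [stBof]
  rw [dif_pos ⟨hP, hc⟩]

lemma st_lower_bound {T : SimpleGraph V} {o : V} {n k : ℕ} {Yn : Finset (Fin n)}
    (htree : T.IsTree) (hk : 1 ≤ k) (hYn : Yn.card = k)
    (hsemi : ∀ v : V, Odd (T.dist o v) → Set.ncard {w : V | T.Adj v w} = k + 1) :
    Nat.factorial k ^ (Set.ncard {v : V | Odd (T.dist o v)}) *
        ∏ j ∈ Finset.range (Set.ncard {v : V | Odd (T.dist o v)}), (n - k - j)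
      ≤ Nat.card {φ : V → Finset (Fin n) //
          Function.Injective φ ∧ φ o = Yn ∧
          (∀ v : V, (φ v).card = k ∨ (φ v).card = k + 1) ∧
          ∀ u v : V, T.Adj u v ↔ (Lgraph n k).Adj (φ u) (φ v)} := by
  classical
  have hn : 0 < n := by
    have h1 : Yn.card ≤ n := by simpa using Finset.card_le_univ Yn
    omega
  obtain ⟨z, -⟩ : Yn.Nonempty := Finset.card_pos.mp (by omega)
  have hoddpar : ∀ c : V, ¬ Odd (T.dist o c) → c ≠ o → Odd (T.dist o (stPar T o c)) := by
    intro c hodd hco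
    have hpd := stPar_dist htree hco
    have h0 := st_dist_pos htree hco
    rw [Nat.odd_iff] at hodd ⊢; omega
  have hchildfacts : ∀ (P : V), Odd (T.dist o P) → ∀ c ∈ stChild T o P,
      ¬ Odd (T.dist o c) ∧ c ≠ o ∧ stPar T o c = P := by
    intro P hP c hc
    obtain ⟨hpar, hco⟩ := stChild_par htree hc
    have hd : T.dist o c = T.dist o P + 1 := hc.2
    refine ⟨?_, hco, hpar⟩
    rw [Nat.odd_iff] at hP ⊢; omega
  -- basic properties of the extended parameters
  have hx1 : ∀ (p1 : {v : V // Odd (T.dist o v)} ↪ {a : Fin n // a ∉ Yn}),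
      Set.InjOn (stXof T o z p1) {v : V | Odd (T.dist o v)} := by
    intro p1 a ha c hc heq
    rw [Set.mem_setOf_eq] at ha hc
    simp only [stXof] at heq
    rw [dif_pos ha, dif_pos hc] at heq
    have := p1.injective (Subtype.ext heq)
    exact congrArg Subtype.val this
  have hx2 : ∀ (p1 : {v : V // Odd (T.dist o v)} ↪ {a : Fin n // a ∉ Yn}),
      ∀ v : V, Odd (T.dist o v) → stXof T o z p1 v ∉ Yn := by
    intro p1 v hv
    simp only [stXof]
    rw [dif_pos hv]
    exact (p1 ⟨v, hv⟩).2
  have hball : ∀ (p2 : (v : {v : V // Odd (T.dist o v)}) →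
        ({w : V // w ∈ stChild T o v.1} ≃ Fin k)),
      ∀ P : V, Odd (T.dist o P) →
        Set.InjOn (stBof T o (⟨0, hk⟩ : Fin k) (fun v => (p2 v : _ → Fin k)))
          (stChild T o P) := by
    intro p2 P hP c1 hc1 c2 hc2 heq
    rw [stBof_spec htree _ _ P hP c1 hc1, stBof_spec htree _ _ P hP c2 hc2] at heq
    have := (p2 ⟨P, hP⟩).injective heq
    exact congrArg Subtype.val this
  -- the decoding function
  have hF : ∃ F : (({v : V // Odd (T.dist o v)} ↪ {a : Fin n // a ∉ Yn}) ×
        ((v : {v : V // Odd (T.dist o v)}) → ({w : V // w ∈ stChild T o v.1} ≃ Fin k))) →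
      {φ : V → Finset (Fin n) //
          Function.Injective φ ∧ φ o = Yn ∧
          (∀ v : V, (φ v).card = k ∨ (φ v).card = k + 1) ∧
          ∀ u v : V, T.Adj u v ↔ (Lgraph n k).Adj (φ u) (φ v)},
      Function.Injective F := by
    refine ⟨fun p => ⟨stPhi T o Yn (stXof T o z p.1)
        (stBof T o (⟨0, hk⟩ : Fin k) (fun v => (p.2 v : _ → Fin k))), ?_, ?_, ?_, ?_⟩, ?_⟩
    · exact st_inj htree hYn (hx1 p.1) (hx2 p.1) (hball p.2)
    · exact stPhi_root T o Yn _ _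
    · intro v
      have := st_card (b := stBof T o (⟨0, hk⟩ : Fin k) (fun v => (p.2 v : _ → Fin k)))
        htree hYn (hx1 p.1) (hx2 p.1) v
      by_cases hodd : Odd (T.dist o v)
      · rw [if_pos hodd] at this; right; exact this
      · rw [if_neg hodd] at this; left; exact this
    · intro u v
      constructor
      · exact fun h => st_forward htree hYn (hx1 p.1) (hx2 p.1) h
      · exact fun h => st_backward htree hYn (hx1 p.1) (hx2 p.1) (hball p.2) h
    · -- injectivity of the decoding
      intro p q hpq
      have hφ : stPhi T o Yn (stXof T o z p.1)
            (stBof T o (⟨0, hk⟩ : Fin k) (fun v => (p.2 v : _ → Fin k))) =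
          stPhi T o Yn (stXof T o z q.1)
            (stBof T o (⟨0, hk⟩ : Fin k) (fun v => (q.2 v : _ → Fin k))) :=
        congrArg Subtype.val hpq
      -- recover the x-values
      have hxall : ∀ v : V, (hv : Odd (T.dist o v)) →
          stXof T o z p.1 v = stXof T o z q.1 v := by
        intro v hv
        have h1 : stXof T o z p.1 v ∈ stPhi T o Yn (stXof T o z q.1)
            (stBof T o (⟨0, hk⟩ : Fin k) (fun v => (q.2 v : _ → Fin k))) v := by
          rw [← hφ, stPhi_odd htree _ _ _ hv]
          exact Finset.mem_insert_self _ _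
        rw [stPhi_odd htree _ _ _ hv] at h1
        rcases Finset.mem_insert.mp h1 with h | h
        · exact h
        · exfalso
          have hpareq : stPhi T o Yn (stXof T o z q.1)
              (stBof T o (⟨0, hk⟩ : Fin k) (fun v => (q.2 v : _ → Fin k))) (stPar T o v) =
              stPhi T o Yn (stXof T o z p.1)
              (stBof T o (⟨0, hk⟩ : Fin k) (fun v => (p.2 v : _ → Fin k))) (stPar T o v) := by
            rw [hφ]
          rw [hpareq] at h
          exact st_x_not_mem_par htree (hx1 p.1) (hx2 p.1) hv h
      refine Prod.ext ?_ ?_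
      · -- first components
        apply DFunLike.ext
        intro v
        apply Subtype.ext
        have := hxall v.1 v.2
        simp only [stXof] at this
        rw [dif_pos v.2, dif_pos v.2] at this
        exact this
      · -- second components
        funext v
        apply Equiv.ext
        intro c
        obtain ⟨hc1, hc2, hc3⟩ := hchildfacts v.1 v.2 c.1 c.2
        -- recover the b-values: the dropped elements agree
        obtain ⟨e1p, e2p, e3p⟩ := st_even_struct
          (x := stXof T o z p.1)
          (b := stBof T o (⟨0, hk⟩ : Fin k) (fun v => (p.2 v : _ → Fin k)))
          htree hYn (hx1 p.1) (hx2 p.1) hc1 hc2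
        obtain ⟨e1q, e2q, e3q⟩ := st_even_struct
          (x := stXof T o z q.1)
          (b := stBof T o (⟨0, hk⟩ : Fin k) (fun v => (q.2 v : _ → Fin k)))
          htree hYn (hx1 q.1) (hx2 q.1) hc1 hc2
        have hoddp : Odd (T.dist o (stPar T o c.1)) := hoddpar c.1 hc1 hc2
        have hxP : stXof T o z p.1 (stPar T o c.1) = stXof T o z q.1 (stPar T o c.1) :=
          hxall _ hoddp
        -- drops agree
        have hdropeq : stDrop T o Yn (stXof T o z p.1)
              (stBof T o (⟨0, hk⟩ : Fin k) (fun v => (p.2 v : _ → Fin k))) c.1 =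
            stDrop T o Yn (stXof T o z q.1)
              (stBof T o (⟨0, hk⟩ : Fin k) (fun v => (q.2 v : _ → Fin k))) c.1 := by
          have hnm : stDrop T o Yn (stXof T o z p.1)
              (stBof T o (⟨0, hk⟩ : Fin k) (fun v => (p.2 v : _ → Fin k))) c.1 ∉
              stPhi T o Yn (stXof T o z p.1)
              (stBof T o (⟨0, hk⟩ : Fin k) (fun v => (p.2 v : _ → Fin k))) c.1 := by
            rw [e1p]; exact Finset.notMem_erase _ _
          rw [hφ, e1q] at hnm
          have he2p' := e2p
          rw [hφ] at he2p'
          by_contra hne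
          exact hnm (Finset.mem_erase.mpr ⟨hne, he2p'⟩)
        -- cardinality of the pick set
        have hcardP := st_card (x := stXof T o z p.1)
          (b := stBof T o (⟨0, hk⟩ : Fin k) (fun v => (p.2 v : _ → Fin k)))
          htree hYn (hx1 p.1) (hx2 p.1) (stPar T o c.1)
        rw [if_pos hoddp] at hcardP
        have hpo : stPar T o c.1 ≠ o := by
          intro h'; rw [h'] at hoddp
          simp [SimpleGraph.dist_self, Nat.odd_iff] at hoddp
        have hxmP : stXof T o z p.1 (stPar T o c.1) ∈ stPhi T o Yn (stXof T o z p.1)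
            (stBof T o (⟨0, hk⟩ : Fin k) (fun v => (p.2 v : _ → Fin k))) (stPar T o c.1) := by
          rw [stPhi_odd htree _ _ _ hoddp]
          exact Finset.mem_insert_self _ _
        have hScard : ((stPhi T o Yn (stXof T o z p.1)
            (stBof T o (⟨0, hk⟩ : Fin k) (fun v => (p.2 v : _ → Fin k))) (stPar T o c.1)).erase
            (stXof T o z p.1 (stPar T o c.1))).card = k := by
          rw [Finset.card_erase_of_mem hxmP, hcardP]
          omega
        -- the pick sets are equal
        have hSeq : ((stPhi T o Yn (stXof T o z p.1)
            (stBof T o (⟨0, hk⟩ : Fin k) (fun v => (p.2 v : _ → Fin k))) (stPar T o c.1)).erase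
            (stXof T o z p.1 (stPar T o c.1))) = ((stPhi T o Yn (stXof T o z q.1)
            (stBof T o (⟨0, hk⟩ : Fin k) (fun v => (q.2 v : _ → Fin k))) (stPar T o c.1)).erase
            (stXof T o z q.1 (stPar T o c.1))) := by
          rw [hφ, hxP]
        have hbeq : stBof T o (⟨0, hk⟩ : Fin k) (fun v => (p.2 v : _ → Fin k)) c.1 =
            stBof T o (⟨0, hk⟩ : Fin k) (fun v => (q.2 v : _ → Fin k)) c.1 := by
          have hdp := hdropeq
          rw [stDrop, stDrop, ← hSeq] at hdp
          apply Fin.ext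
          refine stPick_inj (S := ((stPhi T o Yn (stXof T o z p.1)
            (stBof T o (⟨0, hk⟩ : Fin k) (fun v => (p.2 v : _ → Fin k))) (stPar T o c.1)).erase
            (stXof T o z p.1 (stPar T o c.1)))) ?_ ?_ hdp
          · rw [hScard]
            exact (stBof T o (⟨0, hk⟩ : Fin k) (fun v => (p.2 v : _ → Fin k)) c.1).2
          · rw [hScard]
            exact (stBof T o (⟨0, hk⟩ : Fin k) (fun v => (q.2 v : _ → Fin k)) c.1).2
        rw [stBof_spec htree _ _ v.1 v.2 c.1 c.2, stBof_spec htree _ _ v.1 v.2 c.1 c.2] at hbeq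
        exact hbeq
  obtain ⟨F, hFinj⟩ := hF
  refine le_trans (le_of_eq ?_) (Nat.card_le_card_of_injective F hFinj)
  -- compute the cardinality of the domain
  rw [Nat.card_prod, Nat.card_pi]
  have hOD : Nat.card {v : V // Odd (T.dist o v)} = Set.ncard {v : V | Odd (T.dist o v)} :=
    Nat.card_coe_set_eq _
  have hCC : Fintype.card {a : Fin n // a ∉ Yn} = n - k := by
    rw [Fintype.card_subtype_compl]
    simp [hYn]
  have hCH : ∀ v : {v : V // Odd (T.dist o v)},
      Nat.card ({w : V // w ∈ stChild T o v.1} ≃ Fin k) = Nat.factorial k := by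
    intro v
    have hvo : v.1 ≠ o := by
      intro h'
      have := v.2
      rw [h'] at this
      simp [SimpleGraph.dist_self, Nat.odd_iff] at this
    have hCHcard : Fintype.card {w : V // w ∈ stChild T o v.1} = k := by
      rw [← Nat.card_eq_fintype_card, Nat.card_coe_set_eq]
      exact stChild_ncard htree (hsemi v.1 v.2) hvo
    rw [Nat.card_eq_fintype_card,
      Fintype.card_equiv (Fintype.equivFinOfCardEq hCHcard), hCHcard]
  rw [Finset.prod_congr rfl (fun v _ => hCH v), Finset.prod_const, Finset.card_univ,
    ← Nat.card_eq_fintype_card, hOD]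
  rw [Nat.card_eq_fintype_card (α := {v : V // Odd (T.dist o v)} ↪ {a : Fin n // a ∉ Yn}),
    Fintype.card_embedding_eq, hCC, ← Nat.card_eq_fintype_card, hOD,
    Nat.descFactorial_eq_prod_range]
  ring

end Aux10

/-- Let `(T,o)` be a finite semi-`k`-ary rooted tree with `m = |V_k(T)|`, and let `Y_n` be a
`k`-element subset of `{1,…,n}`. Then the number of induced homomorphisms from `(T,o)` to
`(L_{n,k}, Y_n)` — injective maps `φ : V(T) → V(L_{n,k})` with `φ(o) = Y_n` preserving both
adjacency and non-adjacency — satisfies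
`(k!)^m·∏_{j=0}^{m-1}(n-k-j) ≤ |Ind(T,o; L_{n,k}, Y_n)| ≤ (k!)^m·n^m`. -/
theorem stmt14 {V : Type*} [Fintype V] [DecidableEq V] (k : ℕ) (hk : 1 ≤ k)
    (T : SimpleGraph V) (o : V) (htree : T.IsTree)
    (hsemi : ∀ v : V, Odd (T.dist o v) → Set.ncard {w : V | T.Adj v w} = k + 1)
    (n : ℕ) (Yn : Finset (Fin n)) (hYn : Yn.card = k) :
    Nat.factorial k ^ (Set.ncard {v : V | Odd (T.dist o v)}) *
        ∏ j ∈ Finset.range (Set.ncard {v : V | Odd (T.dist o v)}), (n - k - j)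
      ≤ Nat.card {φ : V → Finset (Fin n) //
          Function.Injective φ ∧ φ o = Yn ∧
          (∀ v : V, (φ v).card = k ∨ (φ v).card = k + 1) ∧
          ∀ u v : V, T.Adj u v ↔ (Lgraph n k).Adj (φ u) (φ v)} ∧
    Nat.card {φ : V → Finset (Fin n) //
          Function.Injective φ ∧ φ o = Yn ∧
          (∀ v : V, (φ v).card = k ∨ (φ v).card = k + 1) ∧
          ∀ u v : V, T.Adj u v ↔ (Lgraph n k).Adj (φ u) (φ v)}
      ≤ Nat.factorial k ^ (Set.ncard {v : V | Odd (T.dist o v)}) *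
          n ^ (Set.ncard {v : V | Odd (T.dist o v)}) :=
  ⟨st_lower_bound htree hk hYn hsemi, st_upper_bound htree hk hYn hsemi⟩
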